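/- arXiv:2510.20779 — 4 statements merged into one kernel-verified Lean document; each statement's English description precedes it below -/
import Mathlib

section
/- The negative continued fraction expansion with all entries ≤ -2 is unique: if [a_0,...,a_n] = [b_0,...,b_m] as rationals, with all a_i, b_j integers ≤ -2, then n = m and a_i = b_i for all i. -/
/-- Negative continued fraction: `ncf [a₀, a₁, …, aₙ] = a₀ - 1/(a₁ - 1/(⋯ - 1/aₙ))`. -/
def ncf : List ℤ → ℚ
  | [] => 0
  | a :: l => (a : ℚ) - (ncf l)⁻¹

lemma ncf_bound : ∀ (l : List ℤ), (∀ a ∈ l, a ≤ -2) → ∀ a : ℤ,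
    (a : ℚ) ≤ ncf (a :: l) ∧ ncf (a :: l) < a + 1 := by
  intro l
  induction l with
  | nil =>
    intro _ a
    simp [ncf]
  | cons b t ih =>
    intro hl a
    have hb : b ≤ -2 := hl b (by simp)
    have ht : ∀ x ∈ t, x ≤ -2 := fun x hx => hl x (by simp [hx])
    obtain ⟨hlo, hhi⟩ := ih ht b
    have hneg : ncf (b :: t) < -1 := by
      have : (b : ℚ) + 1 ≤ -1 := by
        have : (b : ℚ) ≤ -2 := by exact_mod_cast hb
        linarith
      linarith
    have hinv1 : -1 < (ncf (b :: t))⁻¹ := by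
      have h0 : ncf (b :: t) < 0 := by linarith
      rw [show (-1 : ℚ) = (-1 : ℚ)⁻¹ by norm_num]
      exact (inv_lt_inv_of_neg (by norm_num) h0).mpr hneg
    have hinv2 : (ncf (b :: t))⁻¹ < 0 := inv_neg''.mpr (by linarith)
    constructor
    · show (a : ℚ) ≤ (a : ℚ) - (ncf (b :: t))⁻¹
      linarith
    · show (a : ℚ) - (ncf (b :: t))⁻¹ < a + 1
      linarith

lemma ncf_lt_neg_one (l : List ℤ) (h : l ≠ []) (hl : ∀ a ∈ l, a ≤ -2) :
    ncf l < -1 := by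
  obtain ⟨a, t, rfl⟩ := List.exists_cons_of_ne_nil h
  obtain ⟨_, hhi⟩ := ncf_bound t (fun x hx => hl x (by simp [hx])) a
  have ha : a ≤ -2 := hl a (by simp)
  have : (a : ℚ) ≤ -2 := by exact_mod_cast ha
  linarith

lemma ncf_unique_aux : ∀ (l₁ l₂ : List ℤ), l₁ ≠ [] → l₂ ≠ [] →
    (∀ a ∈ l₁, a ≤ -2) → (∀ a ∈ l₂, a ≤ -2) → ncf l₁ = ncf l₂ → l₁ = l₂ := by
  intro l₁
  induction l₁ with
  | nil => intro _ h; exact absurd rfl h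
  | cons a t₁ ih =>
    intro l₂ _ h₂ ha₁ ha₂ h
    obtain ⟨b, t₂, rfl⟩ := List.exists_cons_of_ne_nil h₂
    have ht₁ : ∀ x ∈ t₁, x ≤ -2 := fun x hx => ha₁ x (by simp [hx])
    have ht₂ : ∀ x ∈ t₂, x ≤ -2 := fun x hx => ha₂ x (by simp [hx])
    obtain ⟨hlo₁, hhi₁⟩ := ncf_bound t₁ ht₁ a
    obtain ⟨hlo₂, hhi₂⟩ := ncf_bound t₂ ht₂ b
    have hab : a = b := by
      rw [h] at hlo₁ hhi₁
      have h1 : (a : ℚ) < b + 1 := lt_of_le_of_lt hlo₁ hhi₂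
      have h2 : (b : ℚ) < a + 1 := lt_of_le_of_lt hlo₂ hhi₁
      have h1' : a < b + 1 := by exact_mod_cast h1
      have h2' : b < a + 1 := by exact_mod_cast h2
      omega
    subst hab
    have hinv : (ncf t₁)⁻¹ = (ncf t₂)⁻¹ := by
      have : (a : ℚ) - (ncf t₁)⁻¹ = (a : ℚ) - (ncf t₂)⁻¹ := h
      linarith
    congr 1
    rcases eq_or_ne t₁ [] with rfl | hne₁ <;> rcases eq_or_ne t₂ [] with rfl | hne₂
    · rfl
    · exfalso
      have h2 : ncf t₂ < -1 := ncf_lt_neg_one t₂ hne₂ ht₂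
      have : (ncf t₂)⁻¹ = 0 := by simpa [ncf] using hinv.symm
      have : ncf t₂ = 0 := inv_eq_zero.mp this
      linarith
    · exfalso
      have h1 : ncf t₁ < -1 := ncf_lt_neg_one t₁ hne₁ ht₁
      have : (ncf t₁)⁻¹ = 0 := by simpa [ncf] using hinv
      have : ncf t₁ = 0 := inv_eq_zero.mp this
      linarith
    · exact ih t₂ hne₁ hne₂ ht₁ ht₂ (inv_injective hinv)

/-- The negative continued fraction expansion with all entries `≤ -2` is unique. -/
theorem ncf_expansion_unique (l₁ l₂ : List ℤ) (h₁ : l₁ ≠ []) (h₂ : l₂ ≠ [])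
    (ha₁ : ∀ a ∈ l₁, a ≤ -2) (ha₂ : ∀ a ∈ l₂, a ≤ -2)
    (h : ncf l₁ = ncf l₂) : l₁ = l₂ :=
  ncf_unique_aux l₁ l₂ h₁ h₂ ha₁ ha₂ h
end

section
/- Define a Farey edge between reduced fractions r = a/b and s = c/d (allowing ∞ = 1/0) by |ad - bc| = 1. If -p/q = [a_0, ..., a_n] is the negative continued fraction expansion with all entries ≤ -2 and n ≥ 1, then there is a Farey edge between -p/q and [a_0, ..., a_{n-1}], and there is a Farey edge between -p/q and [a_0, ..., a_n + 1]. -/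
/-- Two (reduced) rationals are joined by an edge in the Farey graph iff
`|ad - bc| = 1` for their numerators and denominators. -/
def fareyEdge (r s : ℚ) : Prop :=
  |r.num * (s.den : ℤ) - (r.den : ℤ) * s.num| = 1


lemma intSub_num_den (b : ℤ) (r : ℚ) :
    ((b : ℚ) - r).num = b * r.den - r.num ∧ (((b : ℚ) - r).den : ℤ) = r.den := by
  have hd : (0:ℤ) < (r.den : ℤ) := mod_cast r.pos
  have h0 : IsCoprime r.num (r.den:ℤ) := by
    rw [Int.isCoprime_iff_gcd_eq_one]; exact r.reduced
  have hc : IsCoprime (b * (r.den:ℤ) - r.num) (r.den:ℤ) := by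
    have h1 := (h0.neg_left).add_mul_left_left b
    have h2 : -r.num + (r.den:ℤ) * b = b * r.den - r.num := by ring
    rwa [h2] at h1
  have hc' : (b * (r.den:ℤ) - r.num).natAbs.Coprime ((r.den:ℤ)).natAbs :=
    Int.isCoprime_iff_gcd_eq_one.mp hc
  have hden : ((r.den:ℤ):ℚ) ≠ 0 := by positivity
  have heq : (b:ℚ) - r = ((b * r.den - r.num : ℤ) : ℚ) / ((r.den:ℤ) : ℚ) := by
    rw [eq_div_iff hden]
    push_cast
    have key := Rat.num_div_den r
    rw [div_eq_iff (by positivity : ((r.den:ℕ):ℚ) ≠ 0)] at key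
    rw [sub_mul, ← key]
  rw [heq]
  exact ⟨Rat.num_div_eq_of_coprime hd hc', Rat.den_div_eq_of_coprime hd hc'⟩

lemma inv_num_den_of_neg (r : ℚ) (h : r < 0) :
    r⁻¹.num = -(r.den : ℤ) ∧ (r⁻¹.den : ℤ) = -r.num := by
  have hn : r.num < 0 := Rat.num_neg.mpr h
  have hd : (0:ℤ) < -r.num := by omega
  have hc' : (-(r.den:ℤ)).natAbs.Coprime (-r.num).natAbs := by
    rw [Int.natAbs_neg, Int.natAbs_neg]
    exact r.reduced.symm
  have heq : r⁻¹ = ((-(r.den:ℤ) : ℤ) : ℚ) / ((-r.num : ℤ) : ℚ) := by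
    conv_lhs => rw [← Rat.num_div_den r, inv_div]
    push_cast
    rw [neg_div_neg_eq]
  rw [heq]
  exact ⟨Rat.num_div_eq_of_coprime hd hc', Rat.den_div_eq_of_coprime hd hc'⟩

lemma fareyEdge_step (b : ℤ) (r s : ℚ) (hr : r < 0) (hs : s < 0)
    (h : fareyEdge r s) : fareyEdge ((b:ℚ) - r⁻¹) ((b:ℚ) - s⁻¹) := by
  obtain ⟨hrn, hrd⟩ := inv_num_den_of_neg r hr
  obtain ⟨hsn, hsd⟩ := inv_num_den_of_neg s hs
  obtain ⟨h1n, h1d⟩ := intSub_num_den b r⁻¹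
  obtain ⟨h2n, h2d⟩ := intSub_num_den b s⁻¹
  unfold fareyEdge at h ⊢
  rw [h1n, h1d, h2n, h2d, hrn, hrd, hsn, hsd]
  have : (b * -r.num - -(r.den:ℤ)) * -s.num - -r.num * (b * -s.num - -(s.den:ℤ))
      = r.num * s.den - (r.den:ℤ) * s.num := by ring
  rw [this]
  exact h

lemma fareyEdge_base (b a : ℤ) (ha : a < 0) :
    fareyEdge ((b:ℚ) - ((a:ℤ):ℚ)⁻¹) ((b:ℤ):ℚ) := by
  have hlt : ((a:ℤ):ℚ) < 0 := by exact_mod_cast ha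
  obtain ⟨hrn, hrd⟩ := inv_num_den_of_neg ((a:ℤ):ℚ) hlt
  obtain ⟨h1n, h1d⟩ := intSub_num_den b ((a:ℤ):ℚ)⁻¹
  rw [Rat.den_intCast] at hrn
  rw [Rat.num_intCast] at hrd
  push_cast at hrn
  unfold fareyEdge
  rw [h1n, h1d, hrn, hrd, Rat.num_intCast, Rat.den_intCast]
  have : (b * -a - -1) * ((1:ℕ):ℤ) - -a * b = 1 := by push_cast; ring
  rw [this]
  simp

lemma ncf_le_neg_one : ∀ (l : List ℤ) (a : ℤ), (∀ b ∈ l, b ≤ -2) → a ≤ -1 →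
    ncf (l ++ [a]) ≤ -1
  | [], a, _, ha => by
      show (a:ℚ) - (ncf [])⁻¹ ≤ -1
      show (a:ℚ) - (0:ℚ)⁻¹ ≤ -1
      norm_num
      exact_mod_cast ha
  | b :: l, a, hl, ha => by
      have hb : b ≤ -2 := hl b (by simp)
      have ih : ncf (l ++ [a]) ≤ -1 :=
        ncf_le_neg_one l a (fun c hc => hl c (by simp [hc])) ha
      show (b : ℚ) - (ncf (l ++ [a]))⁻¹ ≤ -1
      set x := ncf (l ++ [a]) with hx
      have hx0 : x < 0 := lt_of_le_of_lt ih (by norm_num)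
      have hinv0 : x⁻¹ < 0 := inv_lt_zero.mpr hx0
      have hinv1 : -1 ≤ x⁻¹ := by
        nlinarith [mul_inv_cancel₀ (ne_of_lt hx0), ih, hinv0]
      have hbq : (b:ℚ) ≤ -2 := by exact_mod_cast hb
      linarith

lemma ncf_neg_of_ne_nil (l : List ℤ) (hne : l ≠ []) (hl : ∀ b ∈ l, b ≤ -2) :
    ncf l < 0 := by
  rcases (List.eq_nil_or_concat l) with rfl | ⟨L, c, rfl⟩
  · exact absurd rfl hne
  · rw [List.concat_eq_append]
    refine lt_of_le_of_lt (ncf_le_neg_one L c ?_ ?_) (by norm_num)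
    · intro d hd; exact hl d (by simp [hd])
    · have := hl c (by simp); omega

lemma ncf_key : ∀ (l : List ℤ) (a : ℤ), (∀ b ∈ l, b ≤ -2) → a ≤ -2 →
    (l ≠ [] → fareyEdge (ncf (l ++ [a])) (ncf l)) ∧
      fareyEdge (ncf (l ++ [a])) (ncf (l ++ [a + 1]))
  | [], a, _, ha => by
      constructor
      · intro h; exact absurd rfl h
      · have h1 : ncf ([] ++ [a]) = ((a:ℤ):ℚ) := by
          show (a:ℚ) - (0:ℚ)⁻¹ = _; norm_num
        have h2 : ncf ([] ++ [a+1]) = ((a+1:ℤ):ℚ) := by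
          show ((a+1:ℤ):ℚ) - (0:ℚ)⁻¹ = _; norm_num
        rw [h1, h2]
        unfold fareyEdge
        rw [Rat.num_intCast, Rat.den_intCast, Rat.num_intCast, Rat.den_intCast]
        have : a * ((1:ℕ):ℤ) - ((1:ℕ):ℤ) * (a+1) = -1 := by push_cast; ring
        rw [this]
        simp
  | b :: l, a, hl, ha => by
      have hb : b ≤ -2 := hl b (by simp)
      have hl' : ∀ c ∈ l, c ≤ -2 := fun c hc => hl c (by simp [hc])
      obtain ⟨ih1, ih2⟩ := ncf_key l a hl' ha
      have e1 : ncf ((b :: l) ++ [a]) = (b:ℚ) - (ncf (l ++ [a]))⁻¹ := rfl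
      have e2 : ncf ((b :: l) ++ [a+1]) = (b:ℚ) - (ncf (l ++ [a+1]))⁻¹ := rfl
      have hXa : ncf (l ++ [a]) < 0 :=
        lt_of_le_of_lt (ncf_le_neg_one l a hl' (by omega)) (by norm_num)
      have hXa1 : ncf (l ++ [a+1]) < 0 :=
        lt_of_le_of_lt (ncf_le_neg_one l (a+1) hl' (by omega)) (by norm_num)
      constructor
      · intro _
        rcases eq_or_ne l [] with rfl | hne
        · have hb1 : ncf ([b] : List ℤ) = ((b:ℤ):ℚ) := by
            show (b:ℚ) - (0:ℚ)⁻¹ = _; norm_num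
          have ha1 : ncf (([] : List ℤ) ++ [a]) = ((a:ℤ):ℚ) := by
            show (a:ℚ) - (0:ℚ)⁻¹ = _; norm_num
          rw [e1, hb1, ha1]
          exact fareyEdge_base b a (by omega)
        · have e3 : ncf (b :: l) = (b:ℚ) - (ncf l)⁻¹ := rfl
          rw [e1, e3]
          exact fareyEdge_step b _ _ hXa (ncf_neg_of_ne_nil l hne hl') (ih1 hne)
      · rw [e1, e2]
        exact fareyEdge_step b _ _ hXa hXa1 ih2

/-- If `-p/q = [a₀, …, aₙ]` with all entries `≤ -2` and `n ≥ 1`, then `-p/q`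
has a Farey edge to the truncation `[a₀, …, a_{n-1}]` and to the modification
`[a₀, …, aₙ + 1]`. -/
theorem farey_edge_neighbors (l : List ℤ) (a : ℤ) (hl : l ≠ [])
    (ha : ∀ b ∈ l ++ [a], b ≤ -2)
    (p q : ℤ) (hq : 1 ≤ q) (hpq : q < p) (hcop : Int.gcd p q = 1)
    (hval : ncf (l ++ [a]) = -(p : ℚ) / q) :
    fareyEdge (ncf (l ++ [a])) (ncf l) ∧
      fareyEdge (ncf (l ++ [a])) (ncf (l ++ [a + 1])) := by
  have hl' : ∀ b ∈ l, b ≤ -2 := fun b hb => ha b (by simp [hb])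
  have ha' : a ≤ -2 := ha a (by simp)
  obtain ⟨h1, h2⟩ := ncf_key l a hl' ha'
  exact ⟨h1 hl, h2⟩
end

section
/- For coprime p > q ≥ 1 with -p/q = [a_0, ..., a_n] (entries ≤ -2), the truncation [a_0, ..., a_{n-1}] equals -p'/q' in lowest terms where 1 ≤ p' ≤ p and p'·q ≡ 1 (mod p). -/
/-- The 2×2 matrix `∏ [[bᵢ,-1],[1,0]]` over the list, as `(x, y, u, v)`
with columns `(x,y)` and `(u,v)`; then `ncf l = x / y`. -/
def ndm : List ℤ → ℤ × ℤ × ℤ × ℤ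
  | [] => (1, 0, 0, 1)
  | b :: l => (b * (ndm l).1 - (ndm l).2.1, (ndm l).1,
      b * (ndm l).2.2.1 - (ndm l).2.2.2, (ndm l).2.2.1)

lemma ndm_append (l : List ℤ) (a : ℤ) :
    ndm (l ++ [a]) = (a * (ndm l).1 + (ndm l).2.2.1, a * (ndm l).2.1 + (ndm l).2.2.2,
      -(ndm l).1, -(ndm l).2.1) := by
  induction l with
  | nil => simp [ndm]
  | cons b l ih =>
    simp only [List.cons_append, ndm, List.append_eq]
    rw [ih]
    refine Prod.ext (by ring) (Prod.ext (by ring) (Prod.ext (by ring) (by ring)))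

lemma ndm_inv (l : List ℤ) (hl : l ≠ []) (ha : ∀ b ∈ l, b ≤ -2) :
    |(ndm l).1| ≥ |(ndm l).2.1| + 1 ∧
    (ndm l).1 * (ndm l).2.1 < 0 ∧
    (ndm l).2.2.1 * (ndm l).2.2.2 ≤ 0 ∧
    |(ndm l).2.2.1| ≥ |(ndm l).2.2.2| + 1 ∧
    |(ndm l).1| - |(ndm l).2.2.1| ≥ |(ndm l).2.1| - |(ndm l).2.2.2| ∧
    |(ndm l).2.1| - |(ndm l).2.2.2| ≥ 1 ∧
    0 < (ndm l).1 * (ndm l).2.2.1 ∧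
    (ndm l).1 * (ndm l).2.2.2 - (ndm l).2.2.1 * (ndm l).2.1 = 1 ∧
    ncf l = ((ndm l).1 : ℚ) / ((ndm l).2.1 : ℚ) := by
  induction l with
  | nil => exact absurd rfl hl
  | cons b l ih =>
    have hb : b ≤ -2 := ha b (by simp)
    rcases eq_or_ne l [] with rfl | hl'
    · have hb1 : |b * 1 - 0| = -b := by rw [abs_of_neg (by omega : b * 1 - 0 < 0)]; ring
      have hb2 : |b * 0 - 1| = 1 := by norm_num
      simp only [ndm, ncf, hb1, hb2]
      norm_num
      exact ⟨by omega, by omega, by omega, by omega⟩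
    · obtain ⟨A1, A2, A3, A4, A5, A6, A7, A8, A9⟩ :=
        ih hl' (fun c hc => ha c (by simp [hc]))
      set x := (ndm l).1 with hxdef
      set y := (ndm l).2.1 with hydef
      set u := (ndm l).2.2.1 with hudef
      set v := (ndm l).2.2.2 with hvdef
      have hx0 : x ≠ 0 := by intro h; rw [h] at A2; simp at A2
      simp only [ndm]
      rw [← hxdef, ← hydef, ← hudef, ← hvdef]
      have hncf : ncf (b :: l) = (b : ℚ) - (ncf l)⁻¹ := rfl
      rcases mul_neg_iff.mp A2 with ⟨hx, hy⟩ | ⟨hx, hy⟩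
      · -- 0 < x, y < 0
        have hu : 0 < u := by nlinarith
        have hv : v ≤ 0 := by nlinarith
        simp only [abs_of_pos hx, abs_of_neg hy, abs_of_pos hu, abs_of_nonpos hv] at A1 A4 A5 A6
        have hbx : b * x ≤ -2 * x := by nlinarith
        have hbu : b * u ≤ -2 * u := by nlinarith
        have hx' : b * x - y < 0 := by linarith
        have hu' : b * u - v < 0 := by linarith
        simp only [abs_of_neg hx', abs_of_neg hu', abs_of_pos hx, abs_of_pos hu]
        refine ⟨by linarith, mul_neg_of_neg_of_pos hx' hx,
          le_of_lt (mul_neg_of_neg_of_pos hu' hu), by linarith, ?_, by linarith,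
          mul_pos_of_neg_of_neg hx' hu', by linear_combination A8, ?_⟩
        · nlinarith [mul_nonneg (by linarith : (0:ℤ) ≤ -b - 2) (by linarith : (0:ℤ) ≤ x - u)]
        · rw [hncf, A9, inv_div]
          have hxQ : (x : ℚ) ≠ 0 := Int.cast_ne_zero.mpr hx0
          push_cast
          field_simp
      · -- x < 0, 0 < y
        have hu : u < 0 := by nlinarith
        have hv : 0 ≤ v := by nlinarith
        simp only [abs_of_neg hx, abs_of_pos hy, abs_of_neg hu, abs_of_nonneg hv] at A1 A4 A5 A6
        have hbx : -2 * x ≤ b * x := by nlinarith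
        have hbu : -2 * u ≤ b * u := by nlinarith
        have hx' : 0 < b * x - y := by linarith
        have hu' : 0 < b * u - v := by linarith
        simp only [abs_of_pos hx', abs_of_pos hu', abs_of_neg hx, abs_of_neg hu]
        refine ⟨by linarith, mul_neg_of_pos_of_neg hx' hx,
          le_of_lt (mul_neg_of_pos_of_neg hu' hu), by linarith, ?_, by linarith,
          mul_pos hx' hu', by linear_combination A8, ?_⟩
        · nlinarith [mul_nonneg (by linarith : (0:ℤ) ≤ -b - 2) (by linarith : (0:ℤ) ≤ u - x)]
        · rw [hncf, A9, inv_div]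
          have hxQ : (x : ℚ) ≠ 0 := Int.cast_ne_zero.mpr hx0
          push_cast
          field_simp

set_option maxHeartbeats 1000000 in
/-- If `-p/q = [a₀, …, aₙ]` (entries `≤ -2`, `n ≥ 1`), then the truncation
`[a₀, …, a_{n-1}]` equals `-p'/q'` in lowest terms, where `1 ≤ p' ≤ p` and
`p' * q ≡ 1 (mod p)`. -/
theorem truncation_is_inverse_residue (l : List ℤ) (a : ℤ) (hl : l ≠ [])
    (ha : ∀ b ∈ l ++ [a], b ≤ -2)
    (p q : ℤ) (hq : 1 ≤ q) (hpq : q < p) (hcop : Int.gcd p q = 1)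
    (hval : ncf (l ++ [a]) = -(p : ℚ) / q) :
    ∃ p' q' : ℤ, 1 ≤ p' ∧ p' ≤ p ∧ p' * q ≡ 1 [ZMOD p] ∧
      Int.gcd p' q' = 1 ∧ ncf l = -(p' : ℚ) / q' := by
  have hal : ∀ b ∈ l, b ≤ -2 := fun c hc => ha c (by simp [hc])
  have haa : a ≤ -2 := ha a (by simp)
  obtain ⟨B1, B2, B3, B4, B5, B6, B7, B8, B9⟩ := ndm_inv (l ++ [a]) (by simp) ha
  obtain ⟨A1, A2, A3, A4, A5, A6, A7, A8, A9⟩ := ndm_inv l hl hal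
  simp only [ndm_append] at B1 B2 B3 B4 B5 B6 B7 B8 B9
  set x := (ndm l).1 with hxd
  set y := (ndm l).2.1 with hyd
  set u := (ndm l).2.2.1 with hud
  set v := (ndm l).2.2.2 with hvd
  set X := a * x + u with hXd
  set Y := a * y + v with hYd
  -- determinant relating the two levels
  have hdet : x * Y - y * X = 1 := by linear_combination B8
  have hY0 : Y ≠ 0 := by intro h; rw [h] at B2; simp at B2
  have hq0 : (q : ℚ) ≠ 0 := by positivity
  have hp2 : 2 ≤ p := by omega
  -- cross-multiplied value equation
  have hXq : X * q = -(p * Y) := by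
    have hY0Q : (Y : ℚ) ≠ 0 := Int.cast_ne_zero.mpr hY0
    rw [B9] at hval
    field_simp at hval
    rw [mul_comm p Y]; exact_mod_cast hval
  have hcopXY : IsCoprime X Y := ⟨-y, x, by linear_combination hdet⟩
  have hYq : Y ∣ q :=
    (hcopXY.symm).dvd_of_dvd_mul_left ⟨-p, by linear_combination hXq⟩
  have hqY : q ∣ Y := by
    have hcqp : IsCoprime q p := Int.isCoprime_iff_gcd_eq_one.mpr (by rw [Int.gcd_comm]; exact hcop)
    exact hcqp.dvd_of_dvd_mul_left ⟨-X, by linear_combination hXq⟩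
  have hnat : Y.natAbs = q.natAbs :=
    Nat.dvd_antisymm (Int.natAbs_dvd_natAbs.mpr hYq) (Int.natAbs_dvd_natAbs.mpr hqY)
  have hYpm : Y = q ∨ Y = -q := Int.natAbs_eq_natAbs_iff.mp hnat
  have hvabs := abs_nonneg v
  rcases mul_neg_iff.mp A2 with ⟨hx, hy⟩ | ⟨hx, hy⟩
  · -- 0 < x, y < 0 : here Y > 0
    have hvb : y + 1 ≤ v := by
      have h1 := neg_abs_le v
      rw [abs_of_neg hy] at A6
      linarith
    have hay : -2 * y ≤ a * y := by nlinarith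
    have hYpos : 0 < Y := by rw [hYd]; linarith
    have hYq' : Y = q := by
      rcases hYpm with h | h
      · exact h
      · omega
    have hXp : X = -p := by
      have : X * q = -p * q := by rw [hXq, hYq']; ring
      exact mul_right_cancel₀ (show q ≠ 0 by omega) this
    have hdet' : x * q + y * p = 1 := by rw [hYq', hXp] at hdet; linarith [hdet]
    have hXabs : |X| = p := by rw [hXp, abs_of_neg (by omega : -p < 0)]; ring
    have hxabs : |(-x : ℤ)| = x := by rw [abs_neg, abs_of_pos hx]
    have hyabs : |(-y : ℤ)| = -y := by rw [abs_neg, abs_of_neg hy]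
    simp only [hXabs, hxabs, hyabs] at B5 B6
    refine ⟨x, -y, by omega, by linarith, ?_, ?_, ?_⟩
    · exact (Int.modEq_iff_dvd).mpr ⟨y, by linear_combination -hdet'⟩
    · have hcxy : IsCoprime x y := ⟨v, -u, by linear_combination A8⟩
      exact Int.isCoprime_iff_gcd_eq_one.mp hcxy.neg_right
    · rw [A9]; push_cast; rw [neg_div_neg_eq]
  · -- x < 0, 0 < y : here Y < 0
    have hvb : v ≤ y - 1 := by
      have h1 := le_abs_self v
      rw [abs_of_pos hy] at A6
      linarith
    have hay : a * y ≤ -2 * y := by nlinarith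
    have hYneg : Y < 0 := by rw [hYd]; linarith
    have hYq' : Y = -q := by
      rcases hYpm with h | h
      · omega
      · exact h
    have hXp : X = p := by
      have : X * q = p * q := by rw [hXq, hYq']; ring
      exact mul_right_cancel₀ (show q ≠ 0 by omega) this
    have hdet' : -x * q - y * p = 1 := by rw [hYq', hXp] at hdet; linarith [hdet]
    have hXabs : |X| = p := by rw [hXp, abs_of_pos (by omega : (0:ℤ) < p)]
    have hxabs : |(-x : ℤ)| = -x := by rw [abs_neg, abs_of_neg hx]
    have hyabs : |(-y : ℤ)| = y := by rw [abs_neg, abs_of_pos hy]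
    simp only [hXabs, hxabs, hyabs] at B5 B6
    refine ⟨-x, y, by omega, by linarith, ?_, ?_, ?_⟩
    · exact (Int.modEq_iff_dvd).mpr ⟨-y, by linear_combination -hdet'⟩
    · have hcxy : IsCoprime x y := ⟨v, -u, by linear_combination A8⟩
      exact Int.isCoprime_iff_gcd_eq_one.mp hcxy.neg_left
    · rw [A9]; push_cast; ring_nf
end

section
/- For coprime p > q ≥ 1 with -p/q = [a_0, ..., a_n] (entries ≤ -2, n ≥ 1), the modification [a_0, ..., a_n + 1] equals -p''/q'' in lowest terms where 1 ≤ p'' ≤ p and p''·q ≡ p - 1 (mod p). -/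
lemma ncf_cons (a : ℤ) (l : List ℤ) : ncf (a :: l) = (a : ℚ) - (ncf l)⁻¹ := rfl

lemma ncf_key_s10 (a : ℤ) (ha : a ≤ -2) :
    ∀ l : List ℤ, (∀ b ∈ l, b ≤ -2) →
    ∃ P Q P' Q' : ℤ,
      ncf (l ++ [a]) = -(P : ℚ) / Q ∧
      ncf (l ++ [a + 1]) = -((P : ℚ) - (P' : ℚ)) / ((Q : ℚ) - (Q' : ℚ)) ∧
      P' * Q - P * Q' = 1 ∧
      1 ≤ Q ∧ Q < P ∧ 0 ≤ Q' ∧ Q' < P' ∧ P' < P ∧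
      Q' < Q ∧ Q - Q' ≤ P - P' := by
  intro l
  induction l with
  | nil =>
    intro _
    refine ⟨-a, 1, 1, 0, ?_, ?_, by ring, le_refl _, by omega, le_refl _, by norm_num,
      by omega, by norm_num, by omega⟩
    · simp only [List.nil_append, ncf_cons, ncf]
      push_cast
      norm_num
    · simp only [List.nil_append, ncf_cons, ncf]
      push_cast
      norm_num
      ring
  | cons c l ih =>
    intro h
    obtain ⟨P, Q, P', Q', h1, h2, hdet, hQ1, hQP, hQ'0, hQ'P', hP'P, hQ'Q, hmono⟩ :=
      ih (fun b hb => h b (List.mem_cons_of_mem _ hb))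
    have hc : c ≤ -2 := h c List.mem_cons_self
    have hkey : (0:ℤ) ≤ (-c - 2) * (P - P') := by apply mul_nonneg <;> omega
    have hkey2 : (0:ℤ) ≤ (-c - 2) * P' := by apply mul_nonneg <;> omega
    have hkey3 : (0:ℤ) ≤ (-c - 2) * P := by apply mul_nonneg <;> omega
    refine ⟨-c * P - Q, P, -c * P' - Q', P', ?_, ?_, by linear_combination hdet,
      by omega, by nlinarith, by omega, by nlinarith, by nlinarith, by omega, by nlinarith⟩
    · have hPne : (P : ℚ) ≠ 0 := Int.cast_ne_zero.mpr (by omega)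
      rw [List.cons_append, ncf_cons, h1, inv_div]
      push_cast
      rw [div_neg, sub_neg_eq_add, add_div' _ _ _ hPne]
      congr 1
      ring
    · have hPne : (P : ℚ) - (P' : ℚ) ≠ 0 := by
        have h0 : ((P - P' : ℤ) : ℚ) ≠ 0 := Int.cast_ne_zero.mpr (by omega)
        push_cast at h0
        exact h0
      rw [List.cons_append, ncf_cons, h2, inv_div]
      push_cast
      rw [div_neg, sub_neg_eq_add, add_div' _ _ _ hPne]
      congr 1
      ring

/-- If `-p/q = [a₀, …, aₙ]` (entries `≤ -2`, `n ≥ 1`), then the modification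
`[a₀, …, aₙ + 1]` equals `-p''/q''` in lowest terms, where `1 ≤ p'' ≤ p` and
`p'' * q ≡ p - 1 (mod p)`. -/
theorem modification_is_neg_inverse_residue (l : List ℤ) (a : ℤ) (hl : l ≠ [])
    (ha : ∀ b ∈ l ++ [a], b ≤ -2)
    (p q : ℤ) (hq : 1 ≤ q) (hpq : q < p) (hcop : Int.gcd p q = 1)
    (hval : ncf (l ++ [a]) = -(p : ℚ) / q) :
    ∃ p'' q'' : ℤ, 1 ≤ p'' ∧ p'' ≤ p ∧ p'' * q ≡ p - 1 [ZMOD p] ∧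
      Int.gcd p'' q'' = 1 ∧ ncf (l ++ [a + 1]) = -(p'' : ℚ) / q'' := by
  obtain ⟨P, Q, P', Q', h1, h2, hdet, hQ1, hQP, hQ'0, hQ'P', hP'P, hQ'Q, hmono⟩ :=
    ncf_key_s10 a (ha a (by simp)) l (fun b hb => ha b (by simp [hb]))
  rw [h1] at hval
  -- cross multiplication
  have hQne : (Q : ℚ) ≠ 0 := Int.cast_ne_zero.mpr (by omega)
  have hqne : (q : ℚ) ≠ 0 := Int.cast_ne_zero.mpr (by omega)
  have hcross : P * q = p * Q := by
    field_simp at hval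
    exact_mod_cast (by linear_combination -hval : (P:ℚ) * q = p * Q)
  have hcopPQ : IsCoprime P Q := ⟨-Q', P', by linear_combination hdet⟩
  have hcoppq : IsCoprime p q := Int.isCoprime_iff_gcd_eq_one.mpr hcop
  have hPp : P = p := by
    have d1 : P ∣ p := hcopPQ.dvd_of_dvd_mul_right ⟨q, hcross.symm⟩
    have d2 : p ∣ P := hcoppq.dvd_of_dvd_mul_right ⟨Q, hcross⟩
    exact Int.dvd_antisymm (by omega) (by omega) d1 d2
  have hQq : Q = q := by
    have hpne : p ≠ 0 := by omega
    have : p * Q = p * q := by rw [← hcross, hPp]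
    exact mul_left_cancel₀ hpne this
  subst hPp hQq
  refine ⟨P - P', Q - Q', by omega, by omega, ?_, ?_, ?_⟩
  · -- (P - P') * Q ≡ P - 1 [ZMOD P]
    have : P ∣ (P - 1) - (P - P') * Q := ⟨1 - Q + Q', by linear_combination hdet⟩
    exact (Int.modEq_iff_dvd.mpr this)
  · exact Int.isCoprime_iff_gcd_eq_one.mp ⟨-Q', P', by linear_combination hdet⟩
  · rw [h2]
    push_cast
    ring
end
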